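/- arXiv:0903.2494 — 6 statements merged into one kernel-verified Lean document; each statement's English description precedes it below -/
import Mathlib

section
/- Let X be a β-set and let (y,x) be a hook of X, and set X' = (X ∖ {x}) ∪ {y}. Then θ(X') = θ(X). Consequently, if a β-set X'' is obtained from X by removing any finite sequence of hooks in this way, then θ(X'') = θ(X). -/
/-- A partition of a natural number, given as a weakly decreasing,
eventually-zero sequence of parts (0-indexed: `parts i` is the (i+1)-st part). -/
structure NPartition where
  parts : ℕ → ℕ
  antitone : ∀ ⦃i j : ℕ⦄, i ≤ j → parts j ≤ parts i
  finite_support : ∃ N : ℕ, ∀ n : ℕ, N ≤ n → parts n = 0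

/-- The conjugate (dual) partition: `conj j` is the (j+1)-st part of `λ*`,
i.e. the number of indices `i` with `parts i > j`. -/
noncomputable def NPartition.conj (μ : NPartition) (j : ℕ) : ℕ :=
  Nat.card {i : ℕ // j < μ.parts i}

/-- A partition is symmetric if it equals its conjugate. -/
def IsSymmetric (μ : NPartition) : Prop := ∀ j : ℕ, μ.conj j = μ.parts j

/-- `X` is a β-set for `μ`: if `X = {x_1 < … < x_k}` then the parts of `μ`
are `λ_i = x_{k+1−i} − (k − i)` (discarding zero parts); equivalently the
elements of `X` are exactly `parts i + (card X − 1 − i)` for `i < card X`. -/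
def IsBetaSet (X : Finset ℕ) (μ : NPartition) : Prop :=
  ∀ n : ℕ, n ∈ X ↔ ∃ i : ℕ, i < X.card ∧ n + i + 1 = μ.parts i + X.card

/-- A hook of a β-set `X`: a pair `(y, x)` with `y ∉ X`, `x ∈ X`, `y < x`. -/
def IsBetaHook (X : Finset ℕ) (y x : ℕ) : Prop := y ∉ X ∧ x ∈ X ∧ y < x

/-- `θ(X) = t + 1/2`: the number of beads of `X` strictly to the right of `t`
equals the number of spaces (nonnegative integers not in `X`) at positions `≤ t`. -/
def IsTheta (X : Finset ℕ) (t : ℤ) : Prop :=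
  -1 ≤ t ∧ (X.filter (fun x : ℕ => t < (x : ℤ))).card =
    ((Finset.range (t + 1).toNat).filter (fun y => y ∉ X)).card

/-- Removing one hook `(y, x)` from the β-set `X` yields `X'`. -/
def RemoveHook (X X' : Finset ℕ) : Prop :=
  ∃ y x : ℕ, y ∉ X ∧ x ∈ X ∧ y < x ∧ X' = insert y (X.erase x)

/-- Removing one hook of length `p` from the β-set `X` yields `X'`. -/
def RemovePHook (p : ℕ) (X X' : Finset ℕ) : Prop :=
  ∃ y x : ℕ, y ∉ X ∧ x ∈ X ∧ y + p = x ∧ X' = insert y (X.erase x)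

/-- The partition represented by `X` has empty `p`-core: `X` can be reduced by
successive removals of `p`-hooks to the β-set `{0, 1, …, card X − 1}` of `∅`. -/
def HasEmptyPCore (p : ℕ) (X : Finset ℕ) : Prop :=
  Relation.ReflTransGen (RemovePHook p) X (Finset.range X.card)

/-- The induced β-set on runner `γ`: `X_γ = {j : γ + j·p ∈ X}`. -/
def runner (p γ : ℕ) (X : Finset ℕ) : Finset ℕ :=
  (X.filter (fun x => x % p = γ)).image (fun x => x / p)

/-- The set of arm lengths of the diagonal hooks `h_{ii}` of `μ`. -/
def diagArms (μ : NPartition) : Set ℕ :=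
  {a | ∃ d : ℕ, d < μ.parts d ∧ a + d + 1 = μ.parts d}

/-- The set of leg lengths of the diagonal hooks `h_{ii}` of `μ`. -/
def diagLegs (μ : NPartition) : Set ℕ :=
  {l | ∃ d : ℕ, d < μ.parts d ∧ l + d + 1 = μ.conj d}

/-- `δ(μ)`: the set of hook lengths of the diagonal hooks of `μ`. -/
def diagHookLengths (μ : NPartition) : Set ℕ :=
  {e | ∃ d : ℕ, d < μ.parts d ∧ e + 2 * d + 1 = μ.parts d + μ.conj d}

/-- `(x', x)` is a diagonal hook of the β-set `X`: a hook which corresponds to a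
hook `h_{ii}` on the diagonal of the Young diagram under the standard bijection. -/
def IsDiagHook (X : Finset ℕ) (x' x : ℕ) : Prop :=
  IsBetaHook X x' x ∧
  (X.filter (fun z => x ≤ z)).card =
    ((Finset.range (x' + 1)).filter (fun z => z ∉ X)).card

/-- `μ` is concentrated at `{γ, γ*}` (`γ* = p − 1 − γ`): every diagonal hook of `μ`
has arm length congruent to `γ` or `γ*` modulo `p`. -/
def ConcentratedAt (p γ : ℕ) (μ : NPartition) : Prop :=
  ∀ a ∈ diagArms μ, a % p = γ ∨ a % p = p - 1 - γ

/-- `μ` is a `p`-core: no hook of its Young diagram has length `p`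
(the hook at node `(i,j)`, 0-indexed, has length `parts i + conj j − i − j − 1`). -/
def IsPCore (p : ℕ) (μ : NPartition) : Prop :=
  ∀ i j : ℕ, j < μ.parts i → μ.parts i + μ.conj j ≠ p + i + j + 1

/-- `μ` is `γ`-packed: the set of arm lengths of diagonal hooks of `μ` congruent to
`γ` mod `p` is exactly `{γ + i·p : 0 ≤ i ≤ r}` for some `r ≥ 0`. -/
def GammaPacked (p γ : ℕ) (μ : NPartition) : Prop :=
  ∃ r : ℕ, {a | a ∈ diagArms μ ∧ a % p = γ} = {a : ℕ | ∃ i ≤ r, a = γ + i * p}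

/-- The β-set `X` admits no `p`-hook. -/
def NoPHooks (p : ℕ) (X : Finset ℕ) : Prop := ¬ ∃ X' : Finset ℕ, RemovePHook p X X'

/-- `μ0` is the `p`-core of the partition with β-set `X`: it is represented by a
β-set obtained from `X` by repeatedly removing `p`-hooks until none remain. -/
def IsPCoreOf (p : ℕ) (X : Finset ℕ) (μ0 : NPartition) : Prop :=
  ∃ X0 : Finset ℕ, Relation.ReflTransGen (RemovePHook p) X X0 ∧
    NoPHooks p X0 ∧ IsBetaSet X0 μ0
lemma theta_iff_card (X : Finset ℕ) (t : ℤ) :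
    IsTheta X t ↔ (-1 ≤ t ∧ (t + 1).toNat = X.card) := by
  unfold IsTheta
  refine and_congr_right fun h1 => ?_
  set n := (t + 1).toNat with hn
  have hfx : X.filter (fun x : ℕ => t < (x : ℤ)) = X.filter (fun x => ¬ x < n) := by
    apply Finset.filter_congr
    intro x _
    constructor <;> intro <;> omega
  have h2 := Finset.card_filter_add_card_filter_not (s := X)
    (p := fun x => x < n)
  have h3 := Finset.card_filter_add_card_filter_not (s := Finset.range n)
    (p := fun x => x ∈ X)
  rw [Finset.card_range] at h3
  have h4 : (Finset.range n).filter (fun x => x ∈ X) = X.filter (fun x => x < n) := by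
    ext z
    simp only [Finset.mem_filter, Finset.mem_range]
    tauto
  rw [hfx]
  rw [h4] at h3
  omega

lemma removeHook_card {X X' : Finset ℕ} (h : RemoveHook X X') : X'.card = X.card := by
  obtain ⟨y, x, hy, hx, hyx, rfl⟩ := h
  rw [Finset.card_insert_of_notMem (by simp [Finset.mem_erase, hy]),
    Finset.card_erase_of_mem hx]
  have : 1 ≤ X.card := Finset.card_pos.mpr ⟨x, hx⟩
  omega

/-- removing a hook from a β-set does not change `θ`; consequently
neither does removing any finite sequence of hooks. -/
theorem stmt2 :
    (∀ (X X' : Finset ℕ) (t : ℤ), RemoveHook X X' → IsTheta X t → IsTheta X' t) ∧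
    (∀ (X X'' : Finset ℕ) (t : ℤ), Relation.ReflTransGen RemoveHook X X'' →
      IsTheta X t → IsTheta X'' t) := by
  have key : ∀ (X X' : Finset ℕ) (t : ℤ), RemoveHook X X' → IsTheta X t → IsTheta X' t := by
    intro X X' t h ht
    rw [theta_iff_card] at ht ⊢
    rw [removeHook_card h]
    exact ht
  refine ⟨key, fun X X'' t h => ?_⟩
  induction h with
  | refl => exact id
  | tail _ hstep ih => exact fun ht => key _ _ t hstep (ih ht)
end

section
/- Let p be a prime and let λ be a symmetric partition with empty p-core, with β-set X and θ = θ(X). Then for every residue γ with 0 ≤ γ ≤ p − 1, the number of elements x ∈ X with x > θ and x ≡ γ (mod p) equals the number of nonnegative integers y ∉ X with y < θ and y ≡ γ (mod p). -/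
/-- for a symmetric partition with empty `p`-core, on each runner `γ`
the number of beads right of `θ` equals the number of spaces left of `θ`. -/
theorem stmt5 (p : ℕ) (hp : p.Prime) (X : Finset ℕ) (μ : NPartition) (t : ℤ)
    (hX : IsBetaSet X μ) (hsym : IsSymmetric μ) (hcore : HasEmptyPCore p X)
    (ht : IsTheta X t) :
    ∀ γ < p,
      (X.filter (fun x : ℕ => t < (x : ℤ) ∧ x % p = γ)).card =
      ((Finset.range (t + 1).toNat).filter (fun y => y ∉ X ∧ y % p = γ)).card := by
  intro γ hγ
  obtain ⟨ht1, ht2⟩ := ht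
  -- Step 1: (t+1).toNat = X.card
  have hB : X.filter (fun x : ℕ => ¬ t < (x : ℤ)) =
      (Finset.range (t + 1).toNat).filter (fun y => y ∈ X) := by
    ext x
    simp only [Finset.mem_filter, Finset.mem_range, not_lt]
    constructor
    · rintro ⟨h1, h2⟩; exact ⟨by omega, h1⟩
    · rintro ⟨h1, h2⟩; exact ⟨h2, by omega⟩
  have hC : (Finset.range (t + 1).toNat).filter (fun y => ¬ y ∉ X) =
      (Finset.range (t + 1).toNat).filter (fun y => y ∈ X) := by
    simp only [not_not]
  have h1 : (X.filter (fun x : ℕ => t < (x : ℤ))).card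
      + (X.filter (fun x : ℕ => ¬ t < (x : ℤ))).card = X.card :=
    Finset.card_filter_add_card_filter_not (fun x : ℕ => t < (x : ℤ))
  have h2 : ((Finset.range (t + 1).toNat).filter (fun y => y ∉ X)).card
      + ((Finset.range (t + 1).toNat).filter (fun y => ¬ y ∉ X)).card = (t + 1).toNat := by
    rw [Finset.card_filter_add_card_filter_not, Finset.card_range]
  rw [hB] at h1
  rw [hC] at h2
  have hkt : (t + 1).toNat = X.card := by omega
  -- Step 2: p-hook removal preserves residue counts
  have key : ∀ Y Z : Finset ℕ, RemovePHook p Y Z →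
      (Z.filter (fun x => x % p = γ)).card = (Y.filter (fun x => x % p = γ)).card := by
    rintro Y Z ⟨y, x, hy, hx, hyx, rfl⟩
    have hp0 : 0 < p := hp.pos
    have hmod : x % p = y % p := by rw [← hyx, Nat.add_mod_right]
    by_cases hc : y % p = γ
    · have hxc : x % p = γ := by rw [hmod, hc]
      have hxmem : x ∈ Y.filter (fun x => x % p = γ) := Finset.mem_filter.mpr ⟨hx, hxc⟩
      have hynot : y ∉ (Y.filter (fun x => x % p = γ)).erase x := by
        intro h; exact hy (Finset.mem_filter.mp (Finset.mem_of_mem_erase h)).1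
      rw [Finset.filter_insert, if_pos hc, Finset.filter_erase,
        Finset.card_insert_of_notMem hynot, Finset.card_erase_of_mem hxmem]
      have hpos := Finset.card_pos.mpr ⟨x, hxmem⟩
      omega
    · have hxc : x % p ≠ γ := by rw [hmod]; exact hc
      have hxnot : x ∉ Y.filter (fun x => x % p = γ) := by
        intro h; exact hxc (Finset.mem_filter.mp h).2
      rw [Finset.filter_insert, if_neg hc, Finset.filter_erase,
        Finset.erase_eq_of_notMem hxnot]
  have hinv : (X.filter (fun x => x % p = γ)).card =
      ((Finset.range X.card).filter (fun x => x % p = γ)).card := by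
    have gen : ∀ Y Z : Finset ℕ, Relation.ReflTransGen (RemovePHook p) Y Z →
        (Z.filter (fun x => x % p = γ)).card = (Y.filter (fun x => x % p = γ)).card := by
      intro Y Z h
      induction h with
      | refl => rfl
      | tail _ hstep ih => rw [key _ _ hstep]; exact ih
    exact (gen _ _ hcore).symm
  -- Step 3: counting
  rw [hkt]
  have hL : X.filter (fun x : ℕ => t < (x : ℤ) ∧ x % p = γ)
      = X.filter (fun x => x % p = γ ∧ X.card ≤ x) := by
    ext x
    simp only [Finset.mem_filter]
    constructor
    · rintro ⟨hm, h1, h2⟩; exact ⟨hm, h2, by omega⟩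
    · rintro ⟨hm, h1, h2⟩; exact ⟨hm, by omega, h1⟩
  have hR : (Finset.range X.card).filter (fun y => y ∉ X ∧ y % p = γ)
      = (Finset.range X.card).filter (fun y => y % p = γ ∧ ¬ y ∈ X) := by
    ext x
    simp only [Finset.mem_filter]
    tauto
  have s1 : (X.filter (fun x => x % p = γ ∧ X.card ≤ x)).card
      + (X.filter (fun x => x % p = γ ∧ ¬ X.card ≤ x)).card
      = (X.filter (fun x => x % p = γ)).card := by
    rw [← Finset.filter_filter, ← Finset.filter_filter,
      Finset.card_filter_add_card_filter_not]
  have s2 : ((Finset.range X.card).filter (fun y => y % p = γ ∧ y ∈ X)).card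
      + ((Finset.range X.card).filter (fun y => y % p = γ ∧ ¬ y ∈ X)).card
      = ((Finset.range X.card).filter (fun y => y % p = γ)).card := by
    rw [← Finset.filter_filter, ← Finset.filter_filter,
      Finset.card_filter_add_card_filter_not]
  have s3 : X.filter (fun x => x % p = γ ∧ ¬ X.card ≤ x)
      = (Finset.range X.card).filter (fun y => y % p = γ ∧ y ∈ X) := by
    ext x
    simp only [Finset.mem_filter, Finset.mem_range, not_le]
    constructor
    · rintro ⟨h1, h2, h3⟩; exact ⟨h3, h2, h1⟩
    · rintro ⟨h1, h2, h3⟩; exact ⟨h3, h2, by omega⟩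
  rw [s3] at s1
  rw [hL, hR]
  omega
end

section
/- Let p be a prime and let λ be a partition with empty p-core, with β-set X satisfying |X| ≡ 0 (mod p). Then p·(θ(X_γ) + 1/2) = θ(X) + 1/2 for every 0 ≤ γ ≤ p − 1. -/
lemma theta_card (X : Finset ℕ) (t : ℤ) (h : IsTheta X t) : t + 1 = X.card := by
  classical
  obtain ⟨ht, heq⟩ := h
  set n := (t + 1).toNat with hn
  have hnt : (n : ℤ) = t + 1 := Int.toNat_of_nonneg (by omega)
  have h1 : X.filter (fun x : ℕ => t < (x : ℤ)) = X.filter (fun x => ¬ x < n) := by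
    apply Finset.filter_congr
    intro x _
    constructor
    · intro hx; simp only [not_lt]; omega
    · intro hx; simp only [not_lt] at hx; omega
  have h2 : X.filter (fun x => x < n) = (Finset.range n).filter (fun x => x ∈ X) := by
    ext x; simp [Finset.mem_filter, Finset.mem_range, and_comm]
  have h3 : (X.filter (fun x => x < n)).card + (X.filter (fun x => ¬ x < n)).card = X.card :=
    Finset.card_filter_add_card_filter_not _
  have h4 : ((Finset.range n).filter (fun x => x ∈ X)).card
      + ((Finset.range n).filter (fun x => x ∉ X)).card = n := by
    rw [Finset.card_filter_add_card_filter_not, Finset.card_range]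
  rw [h1] at heq
  rw [h2] at h3
  omega

lemma mem_runner {p γ : ℕ} (hp : 0 < p) (hγ : γ < p) (X : Finset ℕ) (j : ℕ) :
    j ∈ runner p γ X ↔ p * j + γ ∈ X := by
  classical
  simp only [runner, Finset.mem_image, Finset.mem_filter]
  constructor
  · rintro ⟨x, ⟨hx, hmod⟩, rfl⟩
    have := Nat.div_add_mod x p
    rwa [show p * (x / p) + γ = x by omega]
  · intro h
    refine ⟨p * j + γ, ⟨h, ?_⟩, ?_⟩
    · rw [Nat.mul_add_mod]; exact Nat.mod_eq_of_lt hγ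
    · rw [Nat.mul_add_div hp, Nat.div_eq_of_lt hγ, add_zero]

lemma runner_card_step {p γ : ℕ} (hp : 0 < p) (hγ : γ < p) {X X' : Finset ℕ}
    (h : RemovePHook p X X') : (runner p γ X').card = (runner p γ X).card := by
  classical
  obtain ⟨y, x, hy, hx, hyx, rfl⟩ := h
  have key : ∀ j : ℕ, p * j + γ = y ↔ (j = y / p ∧ y % p = γ) := by
    intro j
    constructor
    · intro hj
      have h1 : y % p = γ := by
        rw [← hj, Nat.mul_add_mod]; exact Nat.mod_eq_of_lt hγ
      have h2 : y / p = j := by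
        rw [← hj, Nat.mul_add_div hp, Nat.div_eq_of_lt hγ, add_zero]
      exact ⟨h2.symm, h1⟩
    · rintro ⟨rfl, hmod⟩
      have := Nat.div_add_mod y p
      omega
  have keyx : ∀ j : ℕ, p * j + γ = x ↔ (j = x / p ∧ x % p = γ) := by
    intro j
    constructor
    · intro hj
      have h1 : x % p = γ := by
        rw [← hj, Nat.mul_add_mod]; exact Nat.mod_eq_of_lt hγ
      have h2 : x / p = j := by
        rw [← hj, Nat.mul_add_div hp, Nat.div_eq_of_lt hγ, add_zero]
      exact ⟨h2.symm, h1⟩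
    · rintro ⟨rfl, hmod⟩
      have := Nat.div_add_mod x p
      omega
  by_cases hc : y % p = γ
  · have hxm : x % p = γ := by
      have : x % p = y % p := by rw [← hyx]; exact Nat.add_mod_right y p
      omega
    have heq : runner p γ (insert y (X.erase x))
        = insert (y / p) ((runner p γ X).erase (x / p)) := by
      ext j
      rw [mem_runner hp hγ]
      simp only [Finset.mem_insert, Finset.mem_erase, mem_runner hp hγ]
      constructor
      · rintro (hj | ⟨hne, hjX⟩)
        · exact Or.inl ((key j).mp hj).1
        · refine Or.inr ⟨?_, hjX⟩
          intro hjx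
          exact hne (((keyx j).mpr ⟨hjx, hxm⟩))
      · rintro (rfl | ⟨hne, hjX⟩)
        · left; exact ((key _).mpr ⟨rfl, hc⟩)
        · right
          refine ⟨?_, hjX⟩
          intro hjx
          exact hne ((keyx j).mp hjx).1
    rw [heq, Finset.card_insert_of_notMem, Finset.card_erase_of_mem]
    · have hxin : x / p ∈ runner p γ X := by
        rw [mem_runner hp hγ]
        rwa [(keyx (x / p)).mpr ⟨rfl, hxm⟩]
      have : 0 < (runner p γ X).card := Finset.card_pos.mpr ⟨_, hxin⟩
      omega
    · rw [mem_runner hp hγ]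
      rwa [(keyx (x / p)).mpr ⟨rfl, hxm⟩]
    · simp only [Finset.mem_erase]
      rintro ⟨-, hyin⟩
      rw [mem_runner hp hγ, (key (y / p)).mpr ⟨rfl, hc⟩] at hyin
      exact hy hyin
  · have hxm : x % p ≠ γ := by
      have : x % p = y % p := by rw [← hyx]; exact Nat.add_mod_right y p
      omega
    have heq : runner p γ (insert y (X.erase x)) = runner p γ X := by
      ext j
      rw [mem_runner hp hγ, mem_runner hp hγ]
      simp only [Finset.mem_insert, Finset.mem_erase]
      constructor
      · rintro (hj | ⟨-, hjX⟩)
        · exact absurd ((key j).mp hj).2 hc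
        · exact hjX
      · intro hjX
        right
        refine ⟨?_, hjX⟩
        intro hjx
        exact hxm ((keyx j).mp hjx).2
    rw [heq]

lemma runner_card_chain {p γ : ℕ} (hp : 0 < p) (hγ : γ < p) {A B : Finset ℕ}
    (h : Relation.ReflTransGen (RemovePHook p) A B) :
    (runner p γ A).card = (runner p γ B).card := by
  induction h with
  | refl => rfl
  | tail hab hbc ih => exact ih.trans (runner_card_step hp hγ hbc).symm

/-- if `λ` has empty `p`-core and `|X| ≡ 0 (mod p)`, then
`p·(θ(X_γ) + 1/2) = θ(X) + 1/2` for every runner `γ`. -/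
theorem stmt7 (p : ℕ) (hp : p.Prime) (X : Finset ℕ) (μ : NPartition)
    (hX : IsBetaSet X μ) (hcore : HasEmptyPCore p X) (hcard : X.card % p = 0) :
    ∀ γ < p, ∀ s t : ℤ, IsTheta (runner p γ X) s → IsTheta X t →
      (p : ℤ) * (s + 1) = t + 1 := by
  intro γ hγ s t hs ht
  have hp0 : 0 < p := hp.pos
  have hsc := theta_card _ _ hs
  have htc := theta_card _ _ ht
  have hrun : (runner p γ X).card = (runner p γ (Finset.range X.card)).card :=
    runner_card_chain hp0 hγ hcore
  have hdvd : p ∣ X.card := Nat.dvd_of_mod_eq_zero hcard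
  have hrange : runner p γ (Finset.range X.card) = Finset.range (X.card / p) := by
    ext j
    rw [mem_runner hp0 hγ, Finset.mem_range, Finset.mem_range]
    obtain ⟨k, hk⟩ := hdvd
    rw [hk, Nat.mul_div_cancel_left k hp0]
    constructor
    · intro h
      by_contra hcon
      push_neg at hcon
      have : p * k ≤ p * j := Nat.mul_le_mul_left p hcon
      omega
    · intro h
      calc p * j + γ < p * j + p := by omega
        _ = p * (j + 1) := by ring
        _ ≤ p * k := Nat.mul_le_mul_left p h
  have h5 : p * (runner p γ X).card = X.card := by
    rw [hrun, hrange, Finset.card_range]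
    exact Nat.mul_div_cancel' hdvd
  rw [hsc, htc]
  exact_mod_cast h5
end

section
/- Let p be an odd prime, write γ* = p − 1 − γ, and let λ^0 be a symmetric partition that is a p-core. Let γ with 0 ≤ γ ≤ p − 1 and γ ≠ γ*. If λ^0 has a diagonal hook whose arm length is congruent to γ modulo p, then λ^0 has no diagonal hook whose arm length is congruent to γ* modulo p. -/
/-- The infinite β-set (first-column hook lengths, shifted): `n` is a bead iff
`n = parts i - i - 1` for some `i`. -/
private def Bead (μ : NPartition) (n : ℤ) : Prop :=
  ∃ i : ℕ, n = (μ.parts i : ℤ) - i - 1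

private lemma conj_lt_iff (μ : NPartition) (i j : ℕ) :
    i < μ.conj j ↔ j < μ.parts i := by
  obtain ⟨N, hN⟩ := μ.finite_support
  have hcard : μ.conj j = ((Finset.range N).filter (fun k => j < μ.parts k)).card := by
    unfold NPartition.conj
    have heq : ∀ k : ℕ, j < μ.parts k ↔ k ∈ (Finset.range N).filter (fun k => j < μ.parts k) := by
      intro k
      simp only [Finset.mem_filter, Finset.mem_range]
      constructor
      · intro hk
        refine ⟨?_, hk⟩
        by_contra hkN
        have := hN k (le_of_not_gt hkN)
        omega
      · exact fun h => h.2
    have e : {k : ℕ // j < μ.parts k} ≃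
        {k : ℕ // k ∈ (Finset.range N).filter (fun k => j < μ.parts k)} :=
      Equiv.subtypeEquivRight heq
    rw [Nat.card_congr e, Nat.card_eq_fintype_card, Fintype.card_coe]
  rw [hcard]
  constructor
  · intro hi
    by_contra hji
    push_neg at hji
    have hsub : (Finset.range N).filter (fun k => j < μ.parts k) ⊆ Finset.range i := by
      intro k hk
      simp only [Finset.mem_filter, Finset.mem_range] at hk ⊢
      by_contra hki
      exact absurd (lt_of_lt_of_le hk.2 (μ.antitone (le_of_not_gt hki))) (not_lt.mpr hji)
    have := Finset.card_le_card hsub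
    rw [Finset.card_range] at this
    omega
  · intro hj
    have hiN : i < N := by
      by_contra hiN
      have := hN i (le_of_not_gt hiN)
      omega
    have hsub : Finset.range (i + 1) ⊆ (Finset.range N).filter (fun k => j < μ.parts k) := by
      intro k hk
      simp only [Finset.mem_range] at hk
      simp only [Finset.mem_filter, Finset.mem_range]
      exact ⟨lt_of_lt_of_le hk hiN, lt_of_lt_of_le hj (μ.antitone (Nat.lt_succ_iff.mp hk))⟩
    have := Finset.card_le_card hsub
    rw [Finset.card_range] at this
    omega

/-- Trichotomy: every integer is either a bead or a "space" `j - conj j`. -/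
private lemma bead_iff (μ : NPartition) (n : ℤ) :
    Bead μ n ↔ ¬ ∃ j : ℕ, n = (j : ℤ) - μ.conj j := by
  constructor
  · rintro ⟨i, hi⟩ ⟨j, hj⟩
    have hiff := conj_lt_iff μ i j
    -- n = parts i - i - 1 = j - conj j
    have h1 : (μ.parts i : ℤ) + μ.conj j = i + j + 1 := by omega
    rcases lt_or_ge j (μ.parts i) with hlt | hle
    · have : i < μ.conj j := hiff.mpr hlt
      omega
    · have : ¬ i < μ.conj j := fun hc => absurd (hiff.mp hc) (not_lt.mpr hle)
      omega
  · intro hno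
    classical
    have hex : ∃ j : ℕ, n < (j : ℤ) - μ.conj j := by
      rcases lt_or_ge n (0 - (μ.conj 0 : ℤ)) with h0 | h0
      · exact ⟨0, by push_cast; omega⟩
      · refine ⟨(n + μ.conj 0 + 1).toNat, ?_⟩
        have ht : ((n + (μ.conj 0 : ℤ) + 1).toNat : ℤ) = n + μ.conj 0 + 1 :=
          Int.toNat_of_nonneg (by omega)
        have hmono : (μ.conj ((n + (μ.conj 0 : ℤ) + 1).toNat) : ℤ) ≤ μ.conj 0 := by
          have : μ.conj ((n + (μ.conj 0 : ℤ) + 1).toNat) ≤ μ.conj 0 := by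
            -- conj is antitone
            by_contra hc
            push_neg at hc
            -- conj 0 < conj m : then conj 0 < conj m means exists... use conj_lt_iff
            have h1 := (conj_lt_iff μ (μ.conj 0) ((n + (μ.conj 0 : ℤ) + 1).toNat)).mp hc
            have h2 : ¬ μ.conj 0 < μ.conj 0 := lt_irrefl _
            have h3 : 0 < μ.parts (μ.conj 0) := lt_of_le_of_lt (Nat.zero_le _) h1
            have h4 := (conj_lt_iff μ (μ.conj 0) 0).mpr h3
            omega
          exact_mod_cast this
        omega
    obtain ⟨j, hj, hmin⟩ : ∃ j : ℕ, (n < (j : ℤ) - μ.conj j) ∧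
        ∀ k, k < j → ¬ n < (k : ℤ) - μ.conj k :=
      ⟨Nat.find hex, Nat.find_spec hex, fun k hk => Nat.find_min hex hk⟩
    rcases Nat.eq_zero_or_pos j with hj0 | hjpos
    · -- n < -conj 0 ; bead at i = -n-1
      rw [hj0] at hj
      push_cast at hj
      have hn : (0 : ℤ) ≤ -n - 1 := by omega
      refine ⟨(-n - 1).toNat, ?_⟩
      have ht : ((-n - 1).toNat : ℤ) = -n - 1 := Int.toNat_of_nonneg hn
      have hz : μ.parts ((-n - 1).toNat) = 0 := by
        by_contra hc
        have hpos : 0 < μ.parts ((-n - 1).toNat) := Nat.pos_of_ne_zero hc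
        have := (conj_lt_iff μ ((-n - 1).toNat) 0).mpr hpos
        -- (-n-1).toNat < conj 0, but -n-1 ≥ conj 0
        omega
      rw [hz]
      push_cast
      omega
    · -- j ≥ 1, let m = j - 1
      obtain ⟨m, hm⟩ : ∃ m, j = m + 1 := ⟨j - 1, by omega⟩
      have hmlt : ¬ n < (m : ℤ) - μ.conj m := hmin m (by omega)
      push_neg at hmlt
      have hmne : n ≠ (m : ℤ) - μ.conj m := fun hc => hno ⟨m, hc⟩
      have hmlt' : (m : ℤ) - μ.conj m < n := lt_of_le_of_ne hmlt (fun hc => hmne hc.symm)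
      -- conj (m+1) ≤ j - n - 1 ≤ conj m - 1
      have hjm : (j : ℤ) = (m : ℤ) + 1 := by exact_mod_cast hm
      have hnn : (0 : ℤ) ≤ (j : ℤ) - n - 1 := by
        have : (0 : ℤ) ≤ (μ.conj j : ℤ) := Int.ofNat_nonneg _
        omega
      obtain ⟨i, hti⟩ : ∃ i : ℕ, (i : ℤ) = (j : ℤ) - n - 1 :=
        ⟨((j : ℤ) - n - 1).toNat, Int.toNat_of_nonneg hnn⟩
      have hip1 : μ.parts i ≤ j := by
        have : ¬ i < μ.conj j := by omega
        have h2 : ¬ j < μ.parts i := fun hc => this ((conj_lt_iff μ i j).mpr hc)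
        omega
      have hip2 : m < μ.parts i := by
        apply (conj_lt_iff μ i m).mp
        omega
      have hpij : μ.parts i = j := by omega
      exact ⟨i, by rw [hpij]; omega⟩

private lemma bead_sub (p : ℕ) (μ : NPartition) (hcore : IsPCore p μ) {n : ℤ}
    (h : Bead μ n) : Bead μ (n - p) := by
  rw [bead_iff]
  rintro ⟨j, hj⟩
  obtain ⟨i, hi⟩ := h
  -- parts i + conj j = p + i + j + 1
  have hsum : (μ.parts i : ℤ) + μ.conj j = p + i + j + 1 := by omega
  have hjlt : j < μ.parts i := by
    by_contra hc
    push_neg at hc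
    have : ¬ i < μ.conj j := fun h2 => absurd ((conj_lt_iff μ i j).mp h2) (not_lt.mpr hc)
    omega
  exact hcore i j hjlt (by exact_mod_cast hsum)

private lemma bead_symm (μ : NPartition) (hsym : IsSymmetric μ) {n : ℤ}
    (h : Bead μ n) : ¬ Bead μ (-1 - n) := by
  rw [bead_iff]
  intro hno
  obtain ⟨i, hi⟩ := h
  exact hno ⟨i, by rw [hsym i]; omega⟩

private lemma bead_mod (p : ℕ) (hp1 : 0 < p) (μ : NPartition) (hcore : IsPCore p μ) :
    ∀ a : ℕ, Bead μ (a : ℤ) → Bead μ ((a % p : ℕ) : ℤ) := by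
  intro a
  induction a using Nat.strong_induction_on with
  | _ a ih =>
    intro h
    rcases lt_or_ge a p with hlt | hle
    · rwa [Nat.mod_eq_of_lt hlt]
    · have h1 : Bead μ ((a : ℤ) - p) := bead_sub p μ hcore h
      have he : (a : ℤ) - p = ((a - p : ℕ) : ℤ) := by omega
      rw [he] at h1
      have h2 := ih (a - p) (by omega) h1
      have hm : (a - p) % p = a % p := by
        conv_rhs => rw [show a = (a - p) + p by omega]
        rw [Nat.add_mod_right]
      rwa [hm] at h2

private lemma arm_bead (μ : NPartition) {a : ℕ} (ha : a ∈ diagArms μ) :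
    Bead μ (a : ℤ) := by
  obtain ⟨d, hd, hda⟩ := ha
  exact ⟨d, by omega⟩


/-- a symmetric `p`-core with a diagonal hook of arm length
`≡ γ (mod p)` (`γ ≠ γ*`) has no diagonal hook of arm length `≡ γ* (mod p)`. -/
theorem stmt16 (p : ℕ) (hp : p.Prime) (hodd : Odd p) (γ : ℕ) (hγ : γ < p)
    (hne : γ ≠ p - 1 - γ)
    (μ : NPartition) (hsym : IsSymmetric μ) (hcore : IsPCore p μ)
    (h : ∃ a ∈ diagArms μ, a % p = γ) :
    ∀ a ∈ diagArms μ, a % p ≠ p - 1 - γ := by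
  intro b hb hbmod
  obtain ⟨a, ha, hamod⟩ := h
  have hp1 : 0 < p := hp.pos
  have hbg : Bead μ (γ : ℤ) := by
    have := bead_mod p hp1 μ hcore a (arm_bead μ ha)
    rwa [hamod] at this
  have hbg' : Bead μ ((p - 1 - γ : ℕ) : ℤ) := by
    have := bead_mod p hp1 μ hcore b (arm_bead μ hb)
    rwa [hbmod] at this
  have h1 : Bead μ ((γ : ℤ) - p) := bead_sub p μ hcore hbg
  have h2 : ¬ Bead μ (-1 - ((p - 1 - γ : ℕ) : ℤ)) := bead_symm μ hsym hbg'
  have he : -1 - ((p - 1 - γ : ℕ) : ℤ) = (γ : ℤ) - p := by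
    have : ((p - 1 - γ : ℕ) : ℤ) = (p : ℤ) - 1 - γ := by omega
    omega
  rw [he] at h2
  exact h2 h1
end

section
/- Let p be a prime and let λ^0 be a symmetric partition that is a p-core. If λ^0 has a diagonal hook whose arm length is congruent to γ modulo p (for some 0 ≤ γ ≤ p − 1), then λ^0 is γ-packed: the set of arm lengths of diagonal hooks of λ^0 that are congruent to γ modulo p equals {γ + ip : 0 ≤ i ≤ r} for some integer r ≥ 0. -/
namespace Stmt17Aux

noncomputable def cc (μ : NPartition) (i : ℕ) : ℤ := (μ.parts i : ℤ) - i - 1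

lemma cc_anti (μ : NPartition) {i j : ℕ} (hij : i ≤ j) : cc μ j ≤ cc μ i := by
  have := μ.antitone hij
  unfold cc; omega

lemma cc_lb (μ : NPartition) (i : ℕ) : -(i : ℤ) - 1 ≤ cc μ i := by
  unfold cc; omega

lemma conj_lt_iff (μ : NPartition) (i j : ℕ) : i < μ.conj j ↔ j < μ.parts i := by
  obtain ⟨N, hN⟩ := μ.finite_support
  have hex : ∃ n, μ.parts n ≤ j := ⟨N, by rw [hN N le_rfl]; omega⟩
  have hiff : ∀ i : ℕ, j < μ.parts i ↔ i < Nat.find hex := by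
    intro i
    constructor
    · intro h
      by_contra h'
      push_neg at h'
      have h1 := μ.antitone h'
      have h2 := Nat.find_spec hex
      omega
    · intro h
      have := Nat.find_min hex h
      omega
  have hcard : μ.conj j = Nat.find hex := by
    unfold NPartition.conj
    have e : {i : ℕ // j < μ.parts i} ≃ Fin (Nat.find hex) :=
      (Equiv.subtypeEquivRight hiff).trans (Fin.equivSubtype).symm
    rw [Nat.card_congr e, Nat.card_eq_fintype_card, Fintype.card_fin]
  rw [hcard]
  exact (hiff i).symm

lemma sym_lt_iff (μ : NPartition) (hsym : IsSymmetric μ) (i j : ℕ) :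
    j < μ.parts i ↔ i < μ.parts j := by
  rw [← hsym j]
  exact (conj_lt_iff μ i j).symm

lemma rel (μ : NPartition) (hsym : IsSymmetric μ) (z i : ℕ) :
    (z : ℤ) ≤ cc μ i ↔ -(z : ℤ) ≤ cc μ (i + z) := by
  have h1 : (z : ℤ) ≤ cc μ i ↔ i + z < μ.parts i := by unfold cc; omega
  have h2 : -(z : ℤ) ≤ cc μ (i + z) ↔ i < μ.parts (i + z) := by unfold cc; omega
  rw [h1, h2]
  exact sym_lt_iff μ hsym i (i + z)

lemma claim1 (μ : NPartition) (hsym : IsSymmetric μ) (z : ℕ) :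
    ¬ ((∃ i, cc μ i = (z : ℤ)) ∧ (∃ j, cc μ j = -1 - (z : ℤ))) := by
  rintro ⟨⟨i, hi⟩, ⟨j, hj⟩⟩
  have h1 : -(z : ℤ) ≤ cc μ (i + z) := (rel μ hsym z i).mp (by omega)
  have hji : i + z + 1 ≤ j := by
    by_contra h
    have := cc_anti μ (show j ≤ i + z by omega)
    omega
  have h2 : ¬ (((z + 1 : ℕ) : ℤ) ≤ cc μ i) := by push_cast; omega
  have h3 : ¬ (-((z + 1 : ℕ) : ℤ) ≤ cc μ (i + (z + 1))) :=
    fun hh => h2 ((rel μ hsym (z + 1) i).mpr hh)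
  have h4 := cc_anti μ (show i + (z + 1) ≤ j by omega)
  push_cast at h3
  omega

lemma ex_le (μ : NPartition) (z : ℤ) : ∃ n : ℕ, cc μ n ≤ z := by
  obtain ⟨N, hN⟩ := μ.finite_support
  refine ⟨N + z.natAbs + 1, ?_⟩
  have h0 : μ.parts (N + z.natAbs + 1) = 0 := hN _ (by omega)
  unfold cc
  rw [h0]
  omega

lemma claim2 (μ : NPartition) (hsym : IsSymmetric μ) (z : ℕ) :
    (∃ i, cc μ i = (z : ℤ)) ∨ (∃ j, cc μ j = -1 - (z : ℤ)) := by
  by_contra hcon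
  push_neg at hcon
  obtain ⟨h1, h2⟩ := hcon
  classical
  have hex : ∃ n, cc μ n ≤ (z : ℤ) := ex_le μ z
  set m := Nat.find hex with hmdef
  have hm : cc μ m ≤ (z : ℤ) := Nat.find_spec hex
  have hm' : cc μ m ≠ (z : ℤ) := h1 m
  have hup : cc μ (m + z) ≤ -1 - (z : ℤ) := by
    have hnz : ¬ ((z : ℤ) ≤ cc μ m) := by omega
    have hrel : ¬ (-(z : ℤ) ≤ cc μ (m + z)) := fun hh => hnz ((rel μ hsym z m).mpr hh)
    omega
  have hlo : -1 - (z : ℤ) ≤ cc μ (m + z) := by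
    rcases Nat.eq_zero_or_pos m with h0 | hpos
    · have := cc_lb μ z
      rw [h0, Nat.zero_add]
      omega
    · have hmin : ¬ (cc μ (m - 1) ≤ (z : ℤ)) := Nat.find_min hex (by omega)
      have hr := (rel μ hsym (z + 1) (m - 1)).mp (by push_cast; omega)
      have hidx : m - 1 + (z + 1) = m + z := by omega
      rw [hidx] at hr
      push_cast at hr
      omega
  exact h2 (m + z) (by omega)

lemma lemA (μ : NPartition) (hsym : IsSymmetric μ) (z : ℤ) :
    (∃ i, cc μ i = z) ↔ ¬ ∃ j, cc μ j = -1 - z := by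
  rcases le_or_gt 0 z with hz | hz
  · obtain ⟨n, rfl⟩ : ∃ n : ℕ, z = (n : ℤ) := ⟨z.toNat, (Int.toNat_of_nonneg hz).symm⟩
    constructor
    · intro hA hB
      exact claim1 μ hsym n ⟨hA, hB⟩
    · intro hB
      rcases claim2 μ hsym n with hh | hh
      · exact hh
      · exact absurd hh hB
  · have hz' : 0 ≤ -1 - z := by omega
    obtain ⟨n, hn⟩ : ∃ n : ℕ, -1 - z = (n : ℤ) := ⟨(-1 - z).toNat, (Int.toNat_of_nonneg hz').symm⟩
    have hzz : z = -1 - (n : ℤ) := by omega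
    constructor
    · intro hA hB
      rw [hn] at hB
      rw [hzz] at hA
      exact claim1 μ hsym n ⟨hB, hA⟩
    · intro hB
      rcases claim2 μ hsym n with hh | hh
      · exfalso
        apply hB
        rw [hn]
        exact hh
      · rw [← hzz] at hh
        exact hh

lemma core_beta (p : ℕ) (μ : NPartition) (hsym : IsSymmetric μ) (hcore : IsPCore p μ)
    {x y : ℤ} (hx : ∃ i, cc μ i = x) (hy : ¬ ∃ j, cc μ j = y) (hyx : y < x) :
    x - y ≠ (p : ℤ) := by
  obtain ⟨i, hi⟩ := hx
  have hy' : ∃ j, cc μ j = -1 - y := by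
    by_contra hh
    exact hy ((lemA μ hsym y).mpr hh)
  obtain ⟨j, hj⟩ := hy'
  have hdiag : j < μ.parts i := by
    by_contra hij
    push_neg at hij
    have h2 : μ.parts j ≤ i := by
      by_contra h2
      push_neg at h2
      exact absurd ((sym_lt_iff μ hsym i j).mpr h2) (by omega)
    unfold cc at hi hj
    omega
  intro hxy
  have hne := hcore i j hdiag
  rw [hsym j] at hne
  unfold cc at hi hj
  omega

lemma mem_diagArms_iff (μ : NPartition) (a : ℕ) :
    a ∈ diagArms μ ↔ ∃ d, cc μ d = (a : ℤ) := by
  unfold diagArms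
  simp only [Set.mem_setOf_eq]
  constructor
  · rintro ⟨d, h1, h2⟩
    exact ⟨d, by unfold cc; omega⟩
  · rintro ⟨d, hd⟩
    unfold cc at hd
    exact ⟨d, by omega, by omega⟩

lemma step (p : ℕ) (hppos : 0 < p) (μ : NPartition) (hsym : IsSymmetric μ)
    (hcore : IsPCore p μ) {a : ℕ} (hpa : p ≤ a) (ha : a ∈ diagArms μ) :
    a - p ∈ diagArms μ := by
  rw [mem_diagArms_iff] at ha ⊢
  by_contra hcon
  have h' : ¬ ∃ j, cc μ j = (a : ℤ) - (p : ℤ) := by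
    rintro ⟨j, hj⟩
    exact hcon ⟨j, by rw [hj]; omega⟩
  exact core_beta p μ hsym hcore ha h' (by omega) (by ring)

end Stmt17Aux

open Stmt17Aux in
/-- a symmetric `p`-core with a diagonal hook of arm length
`≡ γ (mod p)` is `γ`-packed. -/
theorem stmt17 (p : ℕ) (hp : p.Prime) (γ : ℕ) (hγ : γ < p)
    (μ : NPartition) (hsym : IsSymmetric μ) (hcore : IsPCore p μ)
    (h : ∃ a ∈ diagArms μ, a % p = γ) :
    GammaPacked p γ μ := by
  classical
  obtain ⟨a, ha, hamod⟩ := h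
  have hppos : 0 < p := hp.pos
  have hbound : ∀ b ∈ diagArms μ, b < μ.parts 0 := by
    rintro b ⟨d, h1, h2⟩
    have := μ.antitone (Nat.zero_le d)
    omega
  set P : ℕ → Prop := fun i => (γ + i * p) ∈ diagArms μ with hPdef
  have hPa : P (a / p) := by
    show γ + a / p * p ∈ diagArms μ
    have hdm : γ + a / p * p = a := by
      rw [← hamod]
      exact Nat.mod_add_div' a p
    rw [hdm]
    exact ha
  have hle : a / p ≤ μ.parts 0 :=
    le_trans (Nat.div_le_self a p) (le_of_lt (hbound a ha))
  have hdown : ∀ k i, P (i + k) → P i := by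
    intro k
    induction k with
    | zero => intro i hh; exact hh
    | succ k ih =>
      intro i hh
      apply ih
      have h1 : p ≤ γ + (i + (k + 1)) * p := by
        have : (i + (k + 1)) * p = (i + k) * p + p := by ring
        omega
      have h2 := step p hppos μ hsym hcore h1 hh
      have h3 : γ + (i + (k + 1)) * p - p = γ + (i + k) * p := by
        have : (i + (k + 1)) * p = (i + k) * p + p := by ring
        omega
      rwa [h3] at h2
  refine ⟨Nat.findGreatest P (μ.parts 0), ?_⟩
  have hr : P (Nat.findGreatest P (μ.parts 0)) := Nat.findGreatest_spec hle hPa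
  ext b
  simp only [Set.mem_setOf_eq]
  constructor
  · rintro ⟨hb, hbmod⟩
    refine ⟨b / p, ?_, ?_⟩
    · apply Nat.le_findGreatest
      · exact le_trans (Nat.div_le_self b p) (le_of_lt (hbound b hb))
      · show γ + b / p * p ∈ diagArms μ
        have hdm : γ + b / p * p = b := by
          rw [← hbmod]
          exact Nat.mod_add_div' b p
        rw [hdm]
        exact hb
    · rw [← hbmod]
      exact (Nat.mod_add_div' b p).symm
  · rintro ⟨i, hi, rfl⟩
    constructor
    · have hidx : i + (Nat.findGreatest P (μ.parts 0) - i) = Nat.findGreatest P (μ.parts 0) := by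
        omega
      exact hdown (Nat.findGreatest P (μ.parts 0) - i) i (by rwa [hidx])
    · rw [Nat.add_mul_mod_self_right]
      exact Nat.mod_eq_of_lt hγ
end

section
/- Let p be an odd prime and write γ* = p − 1 − γ. A symmetric partition λ is a p-core if and only if for every γ with 0 ≤ γ ≤ p − 1 the following holds: if λ has a diagonal hook whose arm length is congruent to γ modulo p, then λ is γ-packed and λ has no diagonal hook whose arm length is congruent to γ* modulo p. -/
/-- Galois connection between a partition and its conjugate. -/
lemma NPartition.conj_spec (μ : NPartition) (i j : ℕ) : j < μ.parts i ↔ i < μ.conj j := by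
  obtain ⟨N, hN⟩ := μ.finite_support
  have hne : {n : ℕ | μ.parts n ≤ j}.Nonempty := ⟨N, by simp [hN N le_rfl]⟩
  set c := sInf {n : ℕ | μ.parts n ≤ j} with hc
  have hset : {n : ℕ | j < μ.parts n} = Set.Iio c := by
    ext n
    simp only [Set.mem_setOf_eq, Set.mem_Iio]
    constructor
    · intro h
      by_contra hle
      push_neg at hle
      have hcmem := Nat.sInf_mem hne
      have h2 := μ.antitone hle
      simp only [← hc, Set.mem_setOf_eq] at hcmem
      omega
    · intro h
      have := Nat.notMem_of_lt_sInf (by rw [← hc]; exact h)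
      simp only [Set.mem_setOf_eq] at this
      omega
  have hconj : μ.conj j = c := by
    show Nat.card ({n : ℕ | j < μ.parts n} : Set ℕ) = c
    rw [Nat.card_coe_set_eq, hset, ← Finset.coe_range, Set.ncard_coe_finset,
      Finset.card_range]
  rw [hconj]
  have : i ∈ {n : ℕ | j < μ.parts n} ↔ i ∈ Set.Iio c := by rw [hset]
  simpa using this

/-- For a symmetric partition, the Galois connection is with itself. -/
lemma symm_galois (μ : NPartition) (hsym : IsSymmetric μ) (i j : ℕ) :
    j < μ.parts i ↔ i < μ.parts j := by
  rw [μ.conj_spec i j, hsym j]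

/-- Membership in the set of diagonal arm lengths, simplified. -/
lemma mem_diagArms_iff (μ : NPartition) (a : ℕ) :
    a ∈ diagArms μ ↔ ∃ d : ℕ, μ.parts d = a + d + 1 := by
  constructor
  · rintro ⟨d, _, h2⟩; exact ⟨d, h2.symm⟩
  · rintro ⟨d, h⟩; exact ⟨d, by omega, h.symm⟩

/-- Maya-diagram self-symmetry for a symmetric partition:
`a` is a diagonal arm iff `-1-a` is not a value of `parts i - i - 1`. -/
lemma maya_symm (μ : NPartition) (hsym : IsSymmetric μ) (a : ℕ) :
    (∃ d : ℕ, μ.parts d = a + d + 1) ↔ ¬∃ m : ℕ, μ.parts (a + m) = m := by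
  constructor
  · rintro ⟨d, hd⟩ ⟨m, hm⟩
    rcases le_or_gt m d with h | h
    · -- a + m < parts d, so d < parts (a+m) = m ≤ d
      have h1 : a + m < μ.parts d := by omega
      have h2 := (symm_galois μ hsym d (a + m)).mp h1
      omega
    · -- d < m = parts (a+m), so a + m < parts d
      have h1 : d < μ.parts (a + m) := by omega
      have h2 := (symm_galois μ hsym (a + m) d).mp h1
      omega
  · intro hne
    obtain ⟨N, hN⟩ := μ.finite_support
    have hT : (a + N) ∈ {m : ℕ | μ.parts (a + m) ≤ m} := by
      simp only [Set.mem_setOf_eq]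
      rw [hN (a + (a + N)) (by omega)]
      omega
    have hTne : {m : ℕ | μ.parts (a + m) ≤ m}.Nonempty := ⟨a + N, hT⟩
    set m0 := sInf {m : ℕ | μ.parts (a + m) ≤ m} with hm0
    have hm0mem : μ.parts (a + m0) ≤ m0 := Nat.sInf_mem hTne
    have hm0pos : m0 ≠ 0 := by
      intro h0
      rw [h0] at hm0mem
      exact hne ⟨0, by omega⟩
    obtain ⟨m, hm1⟩ : ∃ m, m0 = m + 1 := ⟨m0 - 1, by omega⟩
    have hm0mem' : μ.parts (a + m + 1) ≤ m + 1 := by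
      rw [hm1] at hm0mem; exact hm0mem
    have hmnot' : m ∉ {m : ℕ | μ.parts (a + m) ≤ m} :=
      Nat.notMem_of_lt_sInf (by rw [← hm0]; omega)
    simp only [Set.mem_setOf_eq, not_le] at hmnot'
    have hmnot := hmnot'
    -- m < parts (a+m) gives a + m < parts m
    have h1 := (symm_galois μ hsym (a + m) m).mp hmnot
    -- parts (a+m+1) ≤ m gives parts m ≤ a + m + 1
    have h2 : ¬ (m < μ.parts (a + m + 1)) := by
      have hne' : μ.parts (a + m + 1) ≠ m + 1 := fun h => hne ⟨m + 1, h⟩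
      omega
    rw [symm_galois μ hsym (a + m + 1) m] at h2
    push_neg at h2
    exact ⟨m, by omega⟩

/-- symmetric `p`-core criterion: a symmetric partition is a
`p`-core iff for every `γ < p`, having a diagonal hook of arm length
`≡ γ (mod p)` implies being `γ`-packed and having no diagonal hook of arm
length `≡ γ* (mod p)`. -/
theorem stmt18 (p : ℕ) (hp : p.Prime) (hodd : Odd p)
    (μ : NPartition) (hsym : IsSymmetric μ) :
    IsPCore p μ ↔
      ∀ γ < p, (∃ a ∈ diagArms μ, a % p = γ) →
        GammaPacked p γ μ ∧ ∀ a ∈ diagArms μ, a % p ≠ p - 1 - γ := by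
  have hp2 : 2 ≤ p := hp.two_le
  -- Step 1: p-core statement in terms of parts only
  have hPcore : IsPCore p μ ↔ ∀ i j : ℕ, μ.parts i + μ.parts j ≠ p + i + j + 1 := by
    constructor
    · intro h i j heq
      rcases lt_or_ge j (μ.parts i) with hj | hj
      · exact h i j hj (by rw [hsym j]; omega)
      · have hi : i < μ.parts j := by
          by_contra hi
          push_neg at hi
          omega
        exact h j i hi (by rw [hsym i]; omega)
    · intro h i j _ heq
      rw [hsym j] at heq
      exact h i j heq
  -- Step 2: equivalence with conditions (I) and (II) on diagonal arms
  have hI_II : (∀ i j : ℕ, μ.parts i + μ.parts j ≠ p + i + j + 1) ↔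
      ((∀ a : ℕ, a + p ∈ diagArms μ → a ∈ diagArms μ) ∧
       (∀ a ∈ diagArms μ, ∀ b ∈ diagArms μ, a + b + 1 ≠ p)) := by
    constructor
    · intro hP
      constructor
      · intro a ha
        rw [mem_diagArms_iff] at ha
        obtain ⟨d, hd⟩ := ha
        rw [mem_diagArms_iff, maya_symm μ hsym]
        rintro ⟨m, hm⟩
        exact hP d (a + m) (by omega)
      · rintro a ha b hb heq
        rw [mem_diagArms_iff] at ha hb
        obtain ⟨d, hd⟩ := ha
        obtain ⟨e, he⟩ := hb
        exact hP d e (by omega)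
    · rintro ⟨hI, hII⟩ i j heq
      have key : ∀ i j : ℕ, i + 1 ≤ μ.parts i →
          μ.parts i + μ.parts j = p + i + j + 1 → False := by
        intro i j hi heq
        have haA : (μ.parts i - i - 1) ∈ diagArms μ := by
          rw [mem_diagArms_iff]; exact ⟨i, by omega⟩
        rcases le_or_gt (j + 1) (μ.parts j) with hj | hj
        · have hbA : (μ.parts j - j - 1) ∈ diagArms μ := by
            rw [mem_diagArms_iff]; exact ⟨j, by omega⟩
          exact hII _ haA _ hbA (by omega)
        · -- parts j ≤ j; set b := j - parts j, then arm = b + p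
          have hb : μ.parts i - i - 1 = (j - μ.parts j) + p := by omega
          rw [hb] at haA
          have hbA := hI _ haA
          rw [mem_diagArms_iff, maya_symm μ hsym] at hbA
          exact hbA ⟨μ.parts j, by congr 1; omega⟩
      rcases le_or_gt (i + 1) (μ.parts i) with hi | hi
      · exact key i j hi heq
      · rcases le_or_gt (j + 1) (μ.parts j) with hj | hj
        · exact key j i hj (by omega)
        · omega
  rw [hPcore, hI_II]
  -- Step 3: chain-descent helper
  have hchain : (∀ a : ℕ, a + p ∈ diagArms μ → a ∈ diagArms μ) →
      ∀ γ t j : ℕ, γ + (j + t) * p ∈ diagArms μ → γ + j * p ∈ diagArms μ := by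
    intro hI γ t
    induction t with
    | zero => intro j h; simpa using h
    | succ t ih =>
      intro j h
      have h1 : γ + (j + 1) * p ∈ diagArms μ := by
        apply ih (j + 1)
        have heq2 : γ + (j + 1 + t) * p = γ + (j + (t + 1)) * p := by ring
        rw [heq2]; exact h
      apply hI
      have : γ + j * p + p = γ + (j + 1) * p := by ring
      rw [this]; exact h1
  -- Step 4: every diagonal arm is < parts 0
  have hbound : ∀ a ∈ diagArms μ, a < μ.parts 0 := by
    rintro a ⟨d, hd, hde⟩
    have := μ.antitone (Nat.zero_le d)
    omega
  constructor
  · -- (I) ∧ (II) → RHS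
    rintro ⟨hI, hII⟩ γ hγ ⟨a, haA, haγ⟩
    have ha' : a = γ + (a / p) * p := by
      have h1 := Nat.div_add_mod a p
      have h2 : p * (a / p) = (a / p) * p := Nat.mul_comm _ _
      omega
    have hγA : γ ∈ diagArms μ := by
      have := hchain hI γ (a / p) 0 (by rw [zero_add, ← ha']; exact haA)
      simpa using this
    constructor
    · -- γ-packed
      have hTne : {i : ℕ | γ + i * p ∉ diagArms μ}.Nonempty := by
        refine ⟨μ.parts 0, fun hmem => ?_⟩
        have h1 := hbound _ hmem
        have h2 : μ.parts 0 * 1 ≤ μ.parts 0 * p := Nat.mul_le_mul_left _ (by omega)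
        omega
      set s := sInf {i : ℕ | γ + i * p ∉ diagArms μ} with hs
      have hsmem : γ + s * p ∉ diagArms μ := Nat.sInf_mem hTne
      have hspos : s ≠ 0 := by
        intro h0
        rw [h0] at hsmem
        simp at hsmem
        exact hsmem hγA
      refine ⟨s - 1, ?_⟩
      ext x
      simp only [Set.mem_setOf_eq]
      constructor
      · rintro ⟨hxA, hxγ⟩
        refine ⟨x / p, ?_, ?_⟩
        · by_contra hgt
          push_neg at hgt
          have hxs : s ≤ x / p := by omega
          have : γ + s * p ∈ diagArms μ := by
            apply hchain hI γ (x / p - s) s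
            have h1 : γ + (s + (x / p - s)) * p = γ + (x / p) * p := by
              congr 2; omega
            rw [h1]
            have h3 := Nat.div_add_mod x p
            have h4 : p * (x / p) = (x / p) * p := Nat.mul_comm _ _
            have h2 : x = γ + (x / p) * p := by omega
            rw [← h2]; exact hxA
          exact hsmem this
        · have h3 := Nat.div_add_mod x p
          have h4 : p * (x / p) = (x / p) * p := Nat.mul_comm _ _
          omega
      · rintro ⟨i, hir, rfl⟩
        constructor
        · by_contra hnot
          have : s ≤ i := Nat.sInf_le hnot
          omega
        · rw [Nat.add_mul_mod_self_right, Nat.mod_eq_of_lt hγ]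
    · -- no arm ≡ γ* mod p
      intro b hbA hbγ
      have hγ' : p - 1 - γ < p := by omega
      have hb' : b = (p - 1 - γ) + (b / p) * p := by
        have h1 := Nat.div_add_mod b p
        have h2 : p * (b / p) = (b / p) * p := Nat.mul_comm _ _
        omega
      have hγ'A : (p - 1 - γ) ∈ diagArms μ := by
        have := hchain hI (p - 1 - γ) (b / p) 0 (by rw [zero_add, ← hb']; exact hbA)
        simpa using this
      exact hII γ hγA (p - 1 - γ) hγ'A (by omega)
  · -- RHS → (I) ∧ (II)
    intro hR
    constructor
    · intro a ha
      have hγ : a % p < p := Nat.mod_lt _ (by omega)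
      have hmod : (a + p) % p = a % p := Nat.add_mod_right a p
      obtain ⟨⟨r, hset⟩, -⟩ := hR (a % p) hγ ⟨a + p, ha, hmod⟩
      have hmem : (a + p) ∈ {x : ℕ | x ∈ diagArms μ ∧ x % p = a % p} := ⟨ha, hmod⟩
      rw [hset] at hmem
      obtain ⟨i, hir, hi⟩ := hmem
      have hipos : i ≠ 0 := by
        intro h0; rw [h0] at hi; omega
      have hix : a = a % p + (i - 1) * p := by
        have hsplit : i * p = (i - 1) * p + p := by
          have h1 : i = (i - 1) + 1 := by omega
          calc i * p = ((i - 1) + 1) * p := by rw [← h1]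
            _ = (i - 1) * p + p := by ring
        omega
      have hmem2 : a ∈ {x : ℕ | ∃ i ≤ r, x = a % p + i * p} :=
        ⟨i - 1, by omega, hix⟩
      rw [← hset] at hmem2
      exact hmem2.1
    · intro a haA b hbA heq
      have hap : a < p := by omega
      obtain ⟨-, hno⟩ := hR a hap ⟨a, haA, Nat.mod_eq_of_lt hap⟩
      exact hno b hbA (by rw [Nat.mod_eq_of_lt (by omega : b < p)]; omega)
end
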